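/- arXiv:2003.06919 — 3 statements merged into one kernel-verified Lean document; each statement's English description precedes it below -/
import Mathlib

section
/- Let A be an indecomposable bounded linear operator on a semiunitary space U with 0 ≠ U₀ ≠ U, and let A₀, A₁ be the induced operators on U₀ and U/U₀. If λ is an eigenvalue of A₀, then λ is also an eigenvalue of A₁. -/
open Module

lemma quad_re (s : ℝ) (c d : ℂ) :
    ((((-s : ℝ) : ℂ) * star c) * c + star (((-s : ℝ) : ℂ) * star c) * star c
      + star (((-s : ℝ) : ℂ) * star c) * ((((-s : ℝ) : ℂ) * star c)) * d).re
    = -2 * s * Complex.normSq c + s ^ 2 * Complex.normSq c * d.re := by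
  have h1 : star (((-s : ℝ) : ℂ) * star c) = ((-s : ℝ) : ℂ) * c := by
    rw [star_mul', star_star, Complex.star_def, Complex.conj_ofReal]
  rw [h1]
  have h2 : (((-s : ℝ) : ℂ) * star c) * c = ((-s * Complex.normSq c : ℝ) : ℂ) := by
    rw [show ((-s * Complex.normSq c : ℝ) : ℂ) = ((-s : ℝ) : ℂ) * ((Complex.normSq c : ℝ) : ℂ) by
      push_cast; ring, Complex.normSq_eq_conj_mul_self, starRingEnd_apply]
    ring
  have h3 : (((-s : ℝ) : ℂ) * c) * star c = ((-s * Complex.normSq c : ℝ) : ℂ) := by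
    rw [show ((-s * Complex.normSq c : ℝ) : ℂ) = ((-s : ℝ) : ℂ) * ((Complex.normSq c : ℝ) : ℂ) by
      push_cast; ring, Complex.normSq_eq_conj_mul_self, starRingEnd_apply]
    ring
  have h4 : (((-s : ℝ) : ℂ) * c) * ((((-s : ℝ) : ℂ)) * star c)
      = ((s ^ 2 * Complex.normSq c : ℝ) : ℂ) := by
    rw [show ((s ^ 2 * Complex.normSq c : ℝ) : ℂ)
        = ((s ^ 2 : ℝ) : ℂ) * ((Complex.normSq c : ℝ) : ℂ) by push_cast; ring,
      Complex.normSq_eq_conj_mul_self, starRingEnd_apply]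
    push_cast
    ring
  rw [h2, h3, h4]
  simp only [Complex.add_re, Complex.ofReal_re, Complex.re_ofReal_mul]
  ring

/-- Cauchy–Schwarz-type vanishing for a positive semidefinite Hermitian form. -/
lemma cs_aux {V : Type} [AddCommGroup V] [Module ℂ V]
    (B : V →ₗ⋆[ℂ] V →ₗ[ℂ] ℂ)
    (hHerm : ∀ u v : V, star (B u v) = B v u)
    (hPos : ∀ u : V, 0 ≤ (B u u).re) {u : V} (hu : B u u = 0) (v : V) : B u v = 0 := by
  by_contra hc
  have hnc : 0 < Complex.normSq (B u v) := Complex.normSq_pos.mpr hc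
  have hr0 : 0 ≤ (B v v).re := hPos v
  set r : ℝ := (B v v).re with hr
  set s : ℝ := 1 / (r + 1) with hs
  have hspos : 0 < s := by positivity
  have hvu : B v u = star (B u v) := (hHerm u v).symm
  have h1 : B (u + (((-s : ℝ) : ℂ) * star (B u v)) • v) (u + (((-s : ℝ) : ℂ) * star (B u v)) • v)
      = ((((-s : ℝ) : ℂ) * star (B u v)) * (B u v)
        + star ((((-s : ℝ) : ℂ)) * star (B u v)) * star (B u v)
        + star ((((-s : ℝ) : ℂ)) * star (B u v)) * ((((-s : ℝ) : ℂ)) * star (B u v)) * (B v v)) := by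
    simp only [map_add, map_smulₛₗ, LinearMap.add_apply, LinearMap.smul_apply, smul_eq_mul,
      RingHom.id_apply, starRingEnd_apply, hu, hvu]
    ring
  have key := hPos (u + (((-s : ℝ) : ℂ) * star (B u v)) • v)
  rw [h1, quad_re] at key
  have hsr : s * (r + 1) = 1 := by
    rw [hs]; field_simp
  nlinarith [mul_pos hspos hnc, mul_pos (mul_pos hspos hspos) hnc]



/-- For an indecomposable bounded operator `A` on a semiunitary space
with `0 ≠ U₀ ≠ U`, every eigenvalue of the restriction `A₀ = A|_{U₀}` is also an
eigenvalue of the induced operator `A₁` on `U/U₀`. -/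
theorem stmt_13 {V : Type} [AddCommGroup V] [Module ℂ V] [FiniteDimensional ℂ V]
    (B : V →ₗ⋆[ℂ] V →ₗ[ℂ] ℂ)
    (hHerm : ∀ u v : V, star (B u v) = B v u)
    (hPos : ∀ u : V, 0 ≤ (B u u).re)
    (U₀ : Submodule ℂ V) (hU₀ : ∀ u : V, u ∈ U₀ ↔ B u u = 0)
    (hbot : U₀ ≠ ⊥) (htop : U₀ ≠ ⊤)
    (A : V →ₗ[ℂ] V) (hinv : ∀ u ∈ U₀, A u ∈ U₀)
    (hindec : ¬ ∃ W₁ W₂ : Submodule ℂ V, W₁ ≠ ⊥ ∧ W₂ ≠ ⊥ ∧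
      W₁ ⊓ W₂ = ⊥ ∧ W₁ ⊔ W₂ = ⊤ ∧
      (∀ u ∈ W₁, A u ∈ W₁) ∧ (∀ u ∈ W₂, A u ∈ W₂) ∧
      (∀ u ∈ W₁, ∀ v ∈ W₂, B u v = 0))
    (lam : ℂ) (hlam : Module.End.HasEigenvalue (A.restrict hinv) lam) :
    Module.End.HasEigenvalue (Submodule.mapQ U₀ U₀ A hinv) lam := by
  by_contra hc
  apply hindec
  set F : Module.End ℂ V := A with hF
  set E : ℂ → Submodule ℂ V := fun μ => F.genEigenspace μ ⊤ with hE
  set W₂ : Submodule ℂ V := ⨆ μ ≠ lam, E μ with hW₂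
  -- commuting of mapQ with powers of (A - lam • 1)
  set Q : Module.End ℂ (V ⧸ U₀) := Submodule.mapQ U₀ U₀ A hinv with hQ
  have hcomm : ∀ (k : ℕ) (x : V),
      ((Q - lam • 1) ^ k) (U₀.mkQ x) = U₀.mkQ (((F - lam • 1) ^ k) x) := by
    intro k
    induction k with
    | zero => intro x; simp
    | succ k ih =>
      intro x
      rw [pow_succ', pow_succ', Module.End.mul_apply, Module.End.mul_apply]
      have hx : ∀ y : V, (Q - lam • 1) (U₀.mkQ y) = U₀.mkQ ((F - lam • 1) y) := by
        intro y
        simp [hQ, hF, Submodule.mapQ_apply, map_sub]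
      rw [ih x, hx]
  -- W₁ ≤ U₀
  have hW₁le : E lam ≤ U₀ := by
    intro x hx
    obtain ⟨k, hk⟩ := Module.End.mem_genEigenspace_top.mp hx
    by_contra hxU
    apply hc
    have hne : U₀.mkQ x ≠ 0 := by
      simpa [Submodule.mkQ_apply, Submodule.Quotient.mk_eq_zero] using hxU
    have hmem : U₀.mkQ x ∈ Q.genEigenspace lam k := by
      rw [Module.End.mem_genEigenspace_nat, LinearMap.mem_ker, hcomm k x,
        LinearMap.mem_ker.mp hk, map_zero]
    exact Module.End.hasEigenvalue_of_hasGenEigenvalue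
      (Submodule.ne_bot_iff _ |>.mpr ⟨U₀.mkQ x, hmem, hne⟩)
  -- eigenvector in U₀
  obtain ⟨v₀, hv₀⟩ := hlam.exists_hasEigenvector
  have hv₀V : F (v₀ : V) = lam • (v₀ : V) := by
    have := hv₀.apply_eq_smul
    have h2 := congrArg (Subtype.val) this
    simpa [LinearMap.restrict_apply] using h2
  have hv₀ne : (v₀ : V) ≠ 0 := by
    simpa [Submodule.coe_eq_zero] using hv₀.2
  refine ⟨E lam, W₂, ?_, ?_, ?_, ?_, ?_, ?_, ?_⟩
  · -- E lam ≠ ⊥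
    refine Submodule.ne_bot_iff _ |>.mpr ⟨(v₀ : V), ?_, hv₀ne⟩
    have : (v₀ : V) ∈ F.genEigenspace lam 1 :=
      Module.End.mem_genEigenspace_one.mpr hv₀V
    exact (F.genEigenspace lam).monotone le_top this
  · -- W₂ ≠ ⊥
    intro hW₂bot
    have hsup : E lam ⊔ W₂ = ⊤ := by
      rw [hW₂, hE, ← iSup_split_single (fun μ => F.genEigenspace μ ⊤) lam]
      exact Module.End.iSup_maxGenEigenspace_eq_top F
    apply htop
    rw [eq_top_iff, ← hsup, hW₂bot, sup_bot_eq]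
    exact hW₁le
  · -- disjoint
    exact disjoint_iff.mp ((Module.End.independent_genEigenspace F ⊤) lam)
  · rw [hW₂, hE, ← iSup_split_single (fun μ => F.genEigenspace μ ⊤) lam]
    exact Module.End.iSup_maxGenEigenspace_eq_top F
  · -- A-invariance of E lam
    exact fun u hu => Module.End.mapsTo_maxGenEigenspace_of_comm (Commute.refl F) lam hu
  · -- A-invariance of W₂
    intro u hu
    have hle : W₂ ≤ Submodule.comap A W₂ := by
      refine iSup₂_le fun μ hμ => ?_
      intro x hx
      exact Submodule.mem_comap.mpr <| Submodule.mem_iSup_of_mem μ <|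
        Submodule.mem_iSup_of_mem hμ <|
          Module.End.mapsTo_maxGenEigenspace_of_comm (Commute.refl F) μ hx
    exact hle hu
  · -- orthogonality
    intro u hu v _
    exact cs_aux B hHerm hPos ((hU₀ u).mp (hW₁le hu)) v
end

section
/- Let A be an indecomposable bounded linear operator on a semiunitary space U with 0 ≠ U₀ ≠ U, with induced operators A₀ on U₀ and A₁ on U/U₀. For every eigenvalue λ of A₀ and every fixed k ≥ 1, the geometric multiplicity of λ in A₁ (i.e., dim ker(A₁ − λ)) is greater than or equal to the number of Jordan blocks J_k(λ) of size exactly k in the Jordan canonical form of A₀. -/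
set_option linter.unusedSectionVars false

open Module LinearMap Submodule

section Aux

variable {V : Type} [AddCommGroup V] [Module ℂ V] [FiniteDimensional ℂ V]

lemma aux_rank_nullity (N : V →ₗ[ℂ] V) (S : Submodule ℂ V) :
    finrank ℂ (S.map N) + finrank ℂ ↥(LinearMap.ker N ⊓ S) = finrank ℂ S := by
  have h := LinearMap.finrank_range_add_finrank_ker (N.domRestrict S)
  rw [LinearMap.range_domRestrict, LinearMap.ker_domRestrict] at h
  have e : (LinearMap.ker N).comap S.subtype
      = ((LinearMap.ker N ⊓ S).comap S.subtype) := by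
    ext x
    simp [LinearMap.mem_ker, x.2]
  rw [e, (Submodule.comapSubtypeEquivOfLe (inf_le_right :
      LinearMap.ker N ⊓ S ≤ S)).finrank_eq] at h
  exact h

/-- Transfer lemma: `g(N V', N U₀) ≤ g(V', U₀)` in dimension-counting form. -/
lemma aux_transfer (N : V →ₗ[ℂ] V) (U₀ R : Submodule ℂ V) (hUR : U₀ ≤ R)
    (hU : U₀.map N ≤ U₀) (hR : R.map N ≤ R) :
    finrank ℂ ↥((U₀.map N).comap N ⊓ R.map N) + finrank ℂ U₀ ≤
      finrank ℂ (U₀.map N) + finrank ℂ ↥(U₀.comap N ⊓ R) := by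
  set X : Submodule ℂ V := (U₀.map N).comap N ⊓ R.map N with hX
  set κ : Submodule ℂ V := LinearMap.ker N ⊓ R with hκ
  set P : Submodule ℂ V := κ ⊔ U₀ with hP
  set Y : Submodule ℂ V := U₀.comap N ⊓ R with hY
  set W : Submodule ℂ V := (X ⊓ U₀).comap N ⊓ R with hW
  -- X ≤ P
  have hXP : X ≤ P := by
    rintro x ⟨hx1, hx2⟩
    obtain ⟨u, hu, huN⟩ := hx1
    have hxR : x ∈ R := hR hx2
    have : x - u ∈ κ := ⟨by simp [LinearMap.mem_ker, map_sub, huN], sub_mem hxR (hUR hu)⟩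
    have : (x - u) + u ∈ P := add_mem (le_sup_left (α := Submodule ℂ V) this)
      (le_sup_right (α := Submodule ℂ V) hu)
    simpa using this
  -- P ≤ Y
  have hPY : P ≤ Y := by
    apply sup_le
    · rintro z ⟨hz1, hz2⟩
      exact ⟨by simp [Submodule.mem_comap, (LinearMap.mem_ker.mp hz1)], hz2⟩
    · intro u hu
      exact ⟨hU (Submodule.mem_map_of_mem hu), hUR hu⟩
  -- W ≤ Y
  have hWY : W ≤ Y := by
    rintro w ⟨hw1, hw2⟩
    exact ⟨Submodule.mem_comap.mpr (Submodule.mem_comap.mp hw1).2, hw2⟩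
  -- map N W = X ⊓ U₀
  have hmapW : W.map N = X ⊓ U₀ := by
    apply le_antisymm
    · rintro _ ⟨w, ⟨hw1, _⟩, rfl⟩
      exact Submodule.mem_comap.mp hw1
    · rintro x ⟨hx1, hx2⟩
      obtain ⟨r, hr, hrN⟩ := (Submodule.mem_inf.mp hx1).2
      exact ⟨r, ⟨Submodule.mem_comap.mpr (by rw [hrN]; exact ⟨hx1, hx2⟩), hr⟩, hrN⟩
  -- ker N ⊓ W = κ
  have hkerW : LinearMap.ker N ⊓ W = κ := by
    apply le_antisymm
    · rintro z ⟨hz1, _, hz3⟩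
      exact ⟨hz1, hz3⟩
    · rintro z ⟨hz1, hz2⟩
      exact ⟨hz1, Submodule.mem_comap.mpr (by
        simp [LinearMap.mem_ker.mp hz1, Submodule.zero_mem]), hz2⟩
  have eW : finrank ℂ ↥(X ⊓ U₀) + finrank ℂ κ = finrank ℂ W := by
    have := aux_rank_nullity N W
    rwa [hmapW, hkerW] at this
  -- bound on W ⊓ P
  have hmapWP : (W ⊓ P).map N ≤ U₀.map N := by
    rintro _ ⟨w, ⟨hwW, hwP⟩, rfl⟩
    obtain ⟨z, hz, u, hu, rfl⟩ := Submodule.mem_sup.mp hwP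
    have : N (z + u) = N u := by
      simp [map_add, LinearMap.mem_ker.mp (Submodule.mem_inf.mp hz).1]
    rw [this]
    exact Submodule.mem_map_of_mem hu
  have hkerWP : LinearMap.ker N ⊓ (W ⊓ P) ≤ κ := by
    rintro z ⟨hz1, hz2, _⟩
    exact ⟨hz1, (Submodule.mem_inf.mp hz2).2⟩
  have eWP : finrank ℂ ↥(W ⊓ P) ≤ finrank ℂ (U₀.map N) + finrank ℂ κ := by
    have h := aux_rank_nullity N (W ⊓ P)
    have h1 : finrank ℂ ((W ⊓ P).map N) ≤ finrank ℂ (U₀.map N) :=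
      Submodule.finrank_mono hmapWP
    have h2 : finrank ℂ ↥(LinearMap.ker N ⊓ (W ⊓ P)) ≤ finrank ℂ κ :=
      Submodule.finrank_mono hkerWP
    omega
  -- sup formulas
  have eSup : finrank ℂ ↥(W ⊔ P) + finrank ℂ ↥(W ⊓ P)
      = finrank ℂ W + finrank ℂ P := Submodule.finrank_sup_add_finrank_inf_eq W P
  have hWPY : finrank ℂ ↥(W ⊔ P) ≤ finrank ℂ Y :=
    Submodule.finrank_mono (sup_le hWY hPY)
  have eP : finrank ℂ P + finrank ℂ ↥(LinearMap.ker N ⊓ U₀)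
      = finrank ℂ κ + finrank ℂ U₀ := by
    have h := Submodule.finrank_sup_add_finrank_inf_eq κ U₀
    have e : κ ⊓ U₀ = LinearMap.ker N ⊓ U₀ := by
      apply le_antisymm
      · rintro z ⟨⟨hz1, _⟩, hz2⟩; exact ⟨hz1, hz2⟩
      · rintro z ⟨hz1, hz2⟩; exact ⟨⟨hz1, hUR hz2⟩, hz2⟩
    rwa [e] at h
  have eX : finrank ℂ ↥(X ⊔ U₀) + finrank ℂ ↥(X ⊓ U₀)
      = finrank ℂ X + finrank ℂ U₀ := Submodule.finrank_sup_add_finrank_inf_eq X U₀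
  have hXUP : finrank ℂ ↥(X ⊔ U₀) ≤ finrank ℂ P :=
    Submodule.finrank_mono (sup_le hXP le_sup_right)
  have hcκ : finrank ℂ ↥(LinearMap.ker N ⊓ U₀) ≤ finrank ℂ κ :=
    Submodule.finrank_mono (inf_le_inf_left _ hUR)
  omega

/-- Base case `k = 1` of the main counting lemma. -/
lemma aux_base (N : V →ₗ[ℂ] V) (U₀ R : Submodule ℂ V) (hUR : U₀ ≤ R)
    (hU : U₀.map N ≤ U₀)
    (hstar : LinearMap.ker N ⊓ U₀ ≤ R.map N) :
    2 * finrank ℂ ↥(LinearMap.ker N ⊓ U₀) + finrank ℂ U₀ ≤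
      finrank ℂ ↥(LinearMap.ker (N ^ 2) ⊓ U₀) + finrank ℂ ↥(U₀.comap N ⊓ R) := by
  set K₁ : Submodule ℂ V := LinearMap.ker N ⊓ U₀ with hK₁
  set K₂ : Submodule ℂ V := LinearMap.ker (N ^ 2) ⊓ U₀ with hK₂
  set κ : Submodule ℂ V := LinearMap.ker N ⊓ R with hκ
  set T : Submodule ℂ V := K₁.comap N ⊓ R with hT
  set P : Submodule ℂ V := κ ⊔ U₀ with hP
  set Y : Submodule ℂ V := U₀.comap N ⊓ R with hY
  have hmapT : T.map N = K₁ := by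
    apply le_antisymm
    · rintro _ ⟨t, ⟨ht1, _⟩, rfl⟩
      exact Submodule.mem_comap.mp ht1
    · intro x hx
      obtain ⟨r, hr, hrN⟩ := hstar hx
      exact ⟨r, ⟨Submodule.mem_comap.mpr (by rw [hrN]; exact hx), hr⟩, hrN⟩
  have hkerT : LinearMap.ker N ⊓ T = κ := by
    apply le_antisymm
    · rintro z ⟨hz1, _, hz3⟩; exact ⟨hz1, hz3⟩
    · rintro z ⟨hz1, hz2⟩
      exact ⟨hz1, Submodule.mem_comap.mpr (by
        simp [LinearMap.mem_ker.mp hz1, Submodule.zero_mem]), hz2⟩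
  have eT : finrank ℂ K₁ + finrank ℂ κ = finrank ℂ T := by
    have := aux_rank_nullity N T
    rwa [hmapT, hkerT] at this
  have hmapTP : (T ⊓ P).map N ≤ K₂.map N := by
    rintro _ ⟨t, ⟨htT, htP⟩, rfl⟩
    obtain ⟨z, hz, u, hu, rfl⟩ := Submodule.mem_sup.mp htP
    have hNz : N z = 0 := LinearMap.mem_ker.mp (Submodule.mem_inf.mp hz).1
    have hNt : N (z + u) = N u := by simp [map_add, hNz]
    have hNuK₁ : N u ∈ K₁ := by
      have := Submodule.mem_comap.mp (Submodule.mem_inf.mp htT).1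
      rwa [hNt] at this
    have huK₂ : u ∈ K₂ := by
      refine ⟨LinearMap.mem_ker.mpr ?_, hu⟩
      have : (N ^ 2) u = N (N u) := by
        rw [pow_two]; rfl
      rw [this, LinearMap.mem_ker.mp (Submodule.mem_inf.mp hNuK₁).1]
    rw [hNt]
    exact Submodule.mem_map_of_mem huK₂
  have hkerTP : LinearMap.ker N ⊓ (T ⊓ P) ≤ κ := by
    rintro z ⟨hz1, hz2, _⟩
    exact ⟨hz1, (Submodule.mem_inf.mp hz2).2⟩
  have eTP : finrank ℂ ↥(T ⊓ P) ≤ finrank ℂ (K₂.map N) + finrank ℂ κ := by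
    have h := aux_rank_nullity N (T ⊓ P)
    have h1 := Submodule.finrank_mono hmapTP
    have h2 := Submodule.finrank_mono hkerTP
    omega
  have eK₂ : finrank ℂ (K₂.map N) + finrank ℂ K₁ = finrank ℂ K₂ := by
    have h := aux_rank_nullity N K₂
    have e : LinearMap.ker N ⊓ K₂ = K₁ := by
      apply le_antisymm
      · rintro z ⟨hz1, _, hz3⟩; exact ⟨hz1, hz3⟩
      · rintro z ⟨hz1, hz2⟩
        refine ⟨hz1, LinearMap.mem_ker.mpr ?_, hz2⟩
        have : (N ^ 2) z = N (N z) := by rw [pow_two]; rfl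
        rw [this, LinearMap.mem_ker.mp hz1, map_zero]
    rwa [e] at h
  have hTY : T ≤ Y := by
    rintro t ⟨ht1, ht2⟩
    exact ⟨Submodule.mem_comap.mpr (Submodule.mem_comap.mp ht1).2, ht2⟩
  have hPY : P ≤ Y := by
    apply sup_le
    · rintro z ⟨hz1, hz2⟩
      exact ⟨by simp [Submodule.mem_comap, LinearMap.mem_ker.mp hz1], hz2⟩
    · intro u hu
      exact ⟨hU (Submodule.mem_map_of_mem hu), hUR hu⟩
  have eSup : finrank ℂ ↥(T ⊔ P) + finrank ℂ ↥(T ⊓ P)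
      = finrank ℂ T + finrank ℂ P := Submodule.finrank_sup_add_finrank_inf_eq T P
  have hTPY : finrank ℂ ↥(T ⊔ P) ≤ finrank ℂ Y :=
    Submodule.finrank_mono (sup_le hTY hPY)
  have eP : finrank ℂ P + finrank ℂ K₁ = finrank ℂ κ + finrank ℂ U₀ := by
    have h := Submodule.finrank_sup_add_finrank_inf_eq κ U₀
    have e : κ ⊓ U₀ = K₁ := by
      apply le_antisymm
      · rintro z ⟨⟨hz1, _⟩, hz2⟩; exact ⟨hz1, hz2⟩
      · rintro z ⟨hz1, hz2⟩; exact ⟨⟨hz1, hUR hz2⟩, hz2⟩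
    rwa [e] at h
  have hk1κ : finrank ℂ K₁ ≤ finrank ℂ κ :=
    Submodule.finrank_mono (inf_le_inf_left _ hUR)
  omega

/-- `ker (N^i) ⊓ N U₀ = N (ker (N^(i+1)) ⊓ U₀)` for invariant `U₀`. -/
lemma aux_ker_map (N : V →ₗ[ℂ] V) (U₀ : Submodule ℂ V) (i : ℕ) :
    LinearMap.ker (N ^ i) ⊓ U₀.map N = (LinearMap.ker (N ^ (i + 1)) ⊓ U₀).map N := by
  apply le_antisymm
  · rintro x ⟨hx1, u, hu, rfl⟩
    refine ⟨u, ⟨LinearMap.mem_ker.mpr ?_, hu⟩, rfl⟩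
    have : (N ^ (i + 1)) u = (N ^ i) (N u) := by
      rw [pow_succ]; rfl
    rw [this, LinearMap.mem_ker.mp hx1]
  · rintro _ ⟨u, ⟨hu1, hu2⟩, rfl⟩
    refine ⟨LinearMap.mem_ker.mpr ?_, Submodule.mem_map_of_mem hu2⟩
    have : (N ^ i) (N u) = (N ^ (i + 1)) u := by
      rw [pow_succ]; rfl
    rw [this, LinearMap.mem_ker.mp hu1]

/-- `ker N ⊓ (ker (N^(i+1)) ⊓ U₀) = ker N ⊓ U₀`. -/
lemma aux_ker_inf (N : V →ₗ[ℂ] V) (U₀ : Submodule ℂ V) (i : ℕ) :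
    LinearMap.ker N ⊓ (LinearMap.ker (N ^ (i + 1)) ⊓ U₀) = LinearMap.ker N ⊓ U₀ := by
  apply le_antisymm
  · rintro z ⟨hz1, _, hz3⟩; exact ⟨hz1, hz3⟩
  · rintro z ⟨hz1, hz2⟩
    refine ⟨hz1, LinearMap.mem_ker.mpr ?_, hz2⟩
    have : (N ^ (i + 1)) z = (N ^ i) (N z) := by rw [pow_succ]; rfl
    rw [this, LinearMap.mem_ker.mp hz1, map_zero]

/-- Main counting lemma, by induction. -/
lemma aux_main (N : V →ₗ[ℂ] V) (j : ℕ) (U₀ R : Submodule ℂ V) (hUR : U₀ ≤ R)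
    (hU : U₀.map N ≤ U₀) (hR : R.map N ≤ R)
    (hstar : (LinearMap.ker (N ^ (j + 1)) ⊓ U₀).map (N ^ j) ≤ R.map (N ^ (j + 1))) :
    2 * finrank ℂ ↥(LinearMap.ker (N ^ (j + 1)) ⊓ U₀) + finrank ℂ U₀ ≤
      finrank ℂ ↥(LinearMap.ker (N ^ j) ⊓ U₀) +
      finrank ℂ ↥(LinearMap.ker (N ^ (j + 2)) ⊓ U₀) +
      finrank ℂ ↥(U₀.comap N ⊓ R) := by
  induction j generalizing U₀ R with
  | zero =>
    have hb := aux_base N U₀ R hUR hU (by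
      have := hstar
      rw [pow_zero, pow_one] at this
      rw [Module.End.one_eq_id, Submodule.map_id] at this
      exact this)
    have g1 : LinearMap.ker (N ^ (0 + 1)) ⊓ U₀ = LinearMap.ker N ⊓ U₀ := by
      norm_num
    have g2 : LinearMap.ker (N ^ (0 + 2)) ⊓ U₀ = LinearMap.ker (N ^ 2) ⊓ U₀ := by
      norm_num
    rw [g1, g2]
    omega
  | succ j ih =>
    -- apply ih to (U₀.map N, R.map N)
    have hUR' : U₀.map N ≤ R.map N := Submodule.map_mono hUR
    have hU' : (U₀.map N).map N ≤ U₀.map N := Submodule.map_mono hU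
    have hR' : (R.map N).map N ≤ R.map N := Submodule.map_mono hR
    have hstar' : (LinearMap.ker (N ^ (j + 1)) ⊓ U₀.map N).map (N ^ j)
        ≤ (R.map N).map (N ^ (j + 1)) := by
      rw [aux_ker_map N U₀ (j + 1)]
      rw [← Submodule.map_comp, ← Submodule.map_comp]
      have e1 : (N ^ j).comp N = N ^ (j + 1) := by
        rw [← Module.End.mul_eq_comp, ← pow_succ]
      have e2 : (N ^ (j + 1)).comp N = N ^ (j + 2) := by
        rw [← Module.End.mul_eq_comp, ← pow_succ]
      rw [e1, e2]
      exact hstar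
    have IH := ih (U₀.map N) (R.map N) hUR' hU' hR' hstar'
    -- translate
    have t1 : LinearMap.ker (N ^ j) ⊓ U₀.map N
        = (LinearMap.ker (N ^ (j + 1)) ⊓ U₀).map N := aux_ker_map N U₀ j
    have t2 : LinearMap.ker (N ^ (j + 1)) ⊓ U₀.map N
        = (LinearMap.ker (N ^ (j + 2)) ⊓ U₀).map N := aux_ker_map N U₀ (j + 1)
    have t3 : LinearMap.ker (N ^ (j + 2)) ⊓ U₀.map N
        = (LinearMap.ker (N ^ (j + 3)) ⊓ U₀).map N := aux_ker_map N U₀ (j + 2)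
    rw [t1, t2, t3] at IH
    have r1 : finrank ℂ ((LinearMap.ker (N ^ (j + 1)) ⊓ U₀).map N)
        + finrank ℂ ↥(LinearMap.ker N ⊓ U₀)
        = finrank ℂ ↥(LinearMap.ker (N ^ (j + 1)) ⊓ U₀) := by
      have h := aux_rank_nullity N (LinearMap.ker (N ^ (j + 1)) ⊓ U₀)
      rwa [aux_ker_inf] at h
    have r2 : finrank ℂ ((LinearMap.ker (N ^ (j + 2)) ⊓ U₀).map N)
        + finrank ℂ ↥(LinearMap.ker N ⊓ U₀)
        = finrank ℂ ↥(LinearMap.ker (N ^ (j + 2)) ⊓ U₀) := by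
      have h := aux_rank_nullity N (LinearMap.ker (N ^ (j + 2)) ⊓ U₀)
      rwa [aux_ker_inf N U₀ (j + 1)] at h
    have r3 : finrank ℂ ((LinearMap.ker (N ^ (j + 3)) ⊓ U₀).map N)
        + finrank ℂ ↥(LinearMap.ker N ⊓ U₀)
        = finrank ℂ ↥(LinearMap.ker (N ^ (j + 3)) ⊓ U₀) := by
      have h := aux_rank_nullity N (LinearMap.ker (N ^ (j + 3)) ⊓ U₀)
      have e : LinearMap.ker N ⊓ (LinearMap.ker (N ^ (j + 3)) ⊓ U₀)
          = LinearMap.ker N ⊓ U₀ := aux_ker_inf N U₀ (j + 2)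
      rwa [e] at h
    have r0 : finrank ℂ (U₀.map N) + finrank ℂ ↥(LinearMap.ker N ⊓ U₀)
        = finrank ℂ U₀ := aux_rank_nullity N U₀
    have tr := aux_transfer N U₀ R hUR hU hR
    show 2 * finrank ℂ ↥(LinearMap.ker (N ^ (j + 2)) ⊓ U₀) + finrank ℂ U₀ ≤
      finrank ℂ ↥(LinearMap.ker (N ^ (j + 1)) ⊓ U₀) +
      finrank ℂ ↥(LinearMap.ker (N ^ (j + 3)) ⊓ U₀) +
      finrank ℂ ↥(U₀.comap N ⊓ R)
    omega

set_option maxHeartbeats 1600000 in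
/-- If `N^(m+1) u = 0` but `N^m u ∉ range (N^(m+1))`, the chain of `u` splits off. -/
lemma aux_split (N : V →ₗ[ℂ] V) (U₀ : Submodule ℂ V)
    (hUinv : ∀ x ∈ U₀, N x ∈ U₀) (m : ℕ) (u : V) (huU : u ∈ U₀)
    (hu : (N ^ (m + 1)) u = 0)
    (hnot : (N ^ m) u ∉ LinearMap.range (N ^ (m + 1))) :
    ∃ W₁ W₂ : Submodule ℂ V, W₂ ≠ ⊥ ∧ W₂ ≤ U₀ ∧ W₁ ⊓ W₂ = ⊥ ∧ W₁ ⊔ W₂ = ⊤ ∧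
      (∀ x ∈ W₁, N x ∈ W₁) ∧ (∀ x ∈ W₂, N x ∈ W₂) := by
  classical
  have hzero : ∀ i, m + 1 ≤ i → (N ^ i) u = 0 := by
    intro i hi
    obtain ⟨t, rfl⟩ := Nat.exists_eq_add_of_le hi
    rw [add_comm, pow_add, Module.End.mul_apply, hu, map_zero]
  -- Step 1: the top chain vector is not in range ⊔ span of lower chain vectors
  have key : ∀ t, t ≤ m → (N ^ m) u ∉ LinearMap.range (N ^ (m + 1)) ⊔
      Submodule.span ℂ ((fun i => (N ^ i) u) '' (Set.Ico (m - t) m)) := by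
    intro t
    induction t with
    | zero =>
      intro _
      simpa [Set.Ico_self] using hnot
    | succ t iht =>
      intro htm
      have ht : t ≤ m := le_trans (Nat.le_succ t) htm
      intro hmem
      obtain ⟨a, ham⟩ : ∃ a, m = a + (t + 1) := ⟨m - (t + 1), by omega⟩
      have ha : m - (t + 1) = a := by omega
      rw [ha] at hmem
      have hIco : Set.Ico a m = insert a (Set.Ico (a + 1) m) := by
        ext x
        simp only [Set.mem_Ico, Set.mem_insert_iff]
        omega
      rw [hIco, Set.image_insert_eq, Submodule.span_insert, sup_left_comm] at hmem
      obtain ⟨q, hq, p, hp, hx⟩ := Submodule.mem_sup.mp hmem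
      obtain ⟨c, rfl⟩ := Submodule.mem_span_singleton.mp hq
      -- apply N^(t+1)
      have hNp : (N ^ (t + 1)) p ∈ LinearMap.range (N ^ (m + 1)) := by
        obtain ⟨p₁, hp₁, p₂, hp₂, rfl⟩ := Submodule.mem_sup.mp hp
        rw [map_add]
        apply Submodule.add_mem
        · obtain ⟨w, rfl⟩ := hp₁
          refine ⟨(N ^ (t + 1)) w, ?_⟩
          rw [← Module.End.mul_apply, ← Module.End.mul_apply, ← pow_add, ← pow_add,
            add_comm (m + 1) (t + 1)]
        · have : (N ^ (t + 1)) p₂ ∈ (Submodule.span ℂ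
              ((fun i => (N ^ i) u) '' (Set.Ico (a + 1) m))).map (N ^ (t + 1)) :=
            Submodule.mem_map_of_mem hp₂
          rw [Submodule.map_span, ← Set.image_comp] at this
          have himg : ((N ^ (t + 1)) ∘ fun i => (N ^ i) u) '' (Set.Ico (a + 1) m) ⊆ {0} := by
            rintro _ ⟨i, hi, rfl⟩
            simp only [Function.comp_apply, Set.mem_singleton_iff]
            rw [← Module.End.mul_apply, ← pow_add]
            exact hzero _ (by simp only [Set.mem_Ico] at hi; omega)
          have h00 : (N ^ (t + 1)) p₂ ∈ Submodule.span ℂ ({0} : Set V) :=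
            Submodule.span_mono himg this
          rw [Submodule.span_zero_singleton] at h00
          have h01 : (N ^ (t + 1)) p₂ = 0 := by simpa using h00
          rw [h01]
          exact Submodule.zero_mem _
      have haN : (N ^ (t + 1)) ((N ^ a) u) = (N ^ m) u := by
        rw [← Module.End.mul_apply, ← pow_add]
        have e : t + 1 + a = m := by omega
        rw [e]
      have h0 : (N ^ (t + 1)) ((N ^ m) u) = 0 := by
        rw [← Module.End.mul_apply, ← pow_add]
        exact hzero (t + 1 + m) (by omega)
      have heq : (0 : V) = c • (N ^ m) u + (N ^ (t + 1)) p := by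
        have h1 := congrArg (fun z => (N ^ (t + 1)) z) hx
        simp only [map_add, map_smul] at h1
        rw [haN, h0] at h1
        exact h1.symm
      by_cases hc : c = 0
      · apply iht ht
        have : (N ^ m) u = p := by rw [← hx, hc, zero_smul, zero_add]
        rw [this]
        have : a + 1 = m - t := by omega
        rwa [this] at hp
      · apply hnot
        have h2 : c • (N ^ m) u = -((N ^ (t + 1)) p) :=
          add_eq_zero_iff_eq_neg.mp heq.symm
        have h3 : (N ^ m) u = c⁻¹ • -((N ^ (t + 1)) p) := by
          rw [← h2, smul_smul, inv_mul_cancel₀ hc, one_smul]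
        rw [h3]
        exact Submodule.smul_mem _ _ (Submodule.neg_mem _ hNp)
  have hMkey := key m le_rfl
  rw [Nat.sub_self] at hMkey
  set M : Submodule ℂ V := LinearMap.range (N ^ (m + 1)) ⊔
      Submodule.span ℂ ((fun i => (N ^ i) u) '' (Set.Ico 0 m)) with hM
  -- Step 2: the dual functional
  obtain ⟨f₀, hf₀x, hf₀M⟩ := Submodule.exists_dual_map_eq_bot_of_notMem hMkey inferInstance
  set f : V →ₗ[ℂ] ℂ := (f₀ ((N ^ m) u))⁻¹ • f₀ with hf
  have hfM : ∀ y ∈ M, f y = 0 := by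
    intro y hy
    have : f₀ y ∈ M.map f₀ := Submodule.mem_map_of_mem hy
    rw [hf₀M] at this
    have h0 : f₀ y = 0 := by simpa using this
    simp [hf, h0]
  have hfm : f ((N ^ m) u) = 1 := by
    simp [hf, inv_mul_cancel₀ hf₀x]
  have hfr : ∀ w, f ((N ^ (m + 1)) w) = 0 := fun w =>
    hfM _ (le_sup_left (α := Submodule ℂ V) (LinearMap.mem_range_self _ w))
  have hfl : ∀ i, i < m → f ((N ^ i) u) = 0 := by
    intro i hi
    exact hfM _ (le_sup_right (α := Submodule ℂ V)
      (Submodule.subset_span ⟨i, ⟨Nat.zero_le i, hi⟩, rfl⟩))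
  -- Step 3: the projection map
  set φ : V →ₗ[ℂ] (Fin (m + 1) → ℂ) :=
    LinearMap.pi (fun i : Fin (m + 1) => f ∘ₗ (N ^ (m - (i : ℕ)))) with hφ
  have hφapp : ∀ (x : V) (i : Fin (m + 1)), φ x i = f ((N ^ (m - (i : ℕ))) x) := by
    intro x i; rfl
  have hφchain : ∀ j : Fin (m + 1), φ ((N ^ (j : ℕ)) u) = Pi.single j 1 := by
    intro j
    funext i
    rw [hφapp]
    rw [← Module.End.mul_apply, ← pow_add]
    rcases lt_trichotomy (i : ℕ) (j : ℕ) with hij | hij | hij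
    · have : m + 1 ≤ m - (i : ℕ) + (j : ℕ) := by
        have := j.isLt; omega
      rw [hzero _ this, map_zero]
      rw [Pi.single_eq_of_ne (by exact fun hc => absurd (Fin.val_eq_val i j |>.mpr hc) (by omega)) 1]
    · have hiv : (i : ℕ) = (j : ℕ) := hij
      have : m - (i : ℕ) + (j : ℕ) = m := by
        have := j.isLt; omega
      rw [this, hfm]
      have : i = j := Fin.ext hij
      rw [this, Pi.single_eq_same]
    · have : m - (i : ℕ) + (j : ℕ) < m := by
        have := i.isLt; omega
      rw [hfl _ this]
      rw [Pi.single_eq_of_ne (by exact fun hc => absurd (Fin.val_eq_val i j |>.mpr hc) (by omega)) 1]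
  set W₁ : Submodule ℂ V := LinearMap.ker φ with hW₁
  set W₂ : Submodule ℂ V := Submodule.span ℂ
      (Set.range (fun j : Fin (m + 1) => (N ^ (j : ℕ)) u)) with hW₂
  have hW2U : W₂ ≤ U₀ := by
    rw [hW₂, Submodule.span_le]
    rintro _ ⟨j, rfl⟩
    exact Module.End.pow_apply_mem_of_forall_mem _ hUinv u huU
  have hNmW₂ : (N ^ m) u ∈ W₂ :=
    Submodule.subset_span ⟨⟨m, Nat.lt_succ_self m⟩, rfl⟩
  have hNmne : (N ^ m) u ≠ 0 := by
    intro h0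
    rw [h0, map_zero] at hfm
    exact one_ne_zero hfm.symm
  have hW2ne : W₂ ≠ ⊥ := by
    intro hb
    rw [hb] at hNmW₂
    exact hNmne (by simpa using hNmW₂)
  have hW2inv : ∀ x ∈ W₂, N x ∈ W₂ := by
    intro x hx
    induction hx using Submodule.span_induction with
    | mem y hy =>
      obtain ⟨j, rfl⟩ := hy
      have : N ((N ^ (j : ℕ)) u) = (N ^ ((j : ℕ) + 1)) u := by
        rw [pow_succ', Module.End.mul_apply]
      rw [this]
      rcases Nat.lt_or_ge ((j : ℕ) + 1) (m + 1) with h | h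
      · exact Submodule.subset_span ⟨⟨(j : ℕ) + 1, h⟩, rfl⟩
      · rw [hzero _ h]
        exact Submodule.zero_mem _
    | zero => rw [map_zero]; exact Submodule.zero_mem _
    | add y z _ _ hy hz => rw [map_add]; exact Submodule.add_mem _ hy hz
    | smul c y _ hy => rw [map_smul]; exact Submodule.smul_mem _ _ hy
  have hW1inv : ∀ x ∈ W₁, N x ∈ W₁ := by
    intro x hx
    rw [hW₁, LinearMap.mem_ker] at hx ⊢
    funext i
    have hxi : ∀ i' : Fin (m + 1), f ((N ^ (m - (i' : ℕ))) x) = 0 := by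
      intro i'
      have := congrFun hx i'
      rwa [hφapp] at this
    have happ : φ (N x) i = f ((N ^ (m - (i : ℕ) + 1)) x) := by
      rw [hφapp, pow_succ, Module.End.mul_apply]
    rcases Nat.eq_zero_or_pos (i : ℕ) with h0 | hpos
    · rw [happ, h0]
      simp only [Nat.sub_zero]
      rw [hfr]
      rfl
    · have hile : (i : ℕ) ≤ m := Nat.lt_succ_iff.mp i.isLt
      have he : m - (i : ℕ) + 1 = m - ((i : ℕ) - 1) := by omega
      rw [happ, he]
      have := hxi ⟨(i : ℕ) - 1, by omega⟩
      simpa using this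
  have hsum : ∀ (c : Fin (m + 1) → ℂ) (i : Fin (m + 1)),
      (∑ j, c j • (Pi.single j (1 : ℂ) : Fin (m + 1) → ℂ)) i = c i := by
    intro c i
    rw [Finset.sum_apply]
    have : ∀ j : Fin (m + 1), (c j • (Pi.single j (1 : ℂ) : Fin (m + 1) → ℂ)) i
        = if i = j then c j else 0 := by
      intro j
      rw [Pi.smul_apply, Pi.single_apply]
      by_cases h : i = j <;> simp [h]
    rw [Finset.sum_congr rfl (fun j _ => this j)]
    simp
  have hdisj : W₁ ⊓ W₂ = ⊥ := by
    rw [eq_bot_iff]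
    rintro x ⟨hx1, hx2⟩
    rw [hW₂] at hx2
    obtain ⟨c, rfl⟩ := (mem_span_range_iff_exists_fun ℂ).mp hx2
    have hφx : φ (∑ j, c j • (N ^ (j : ℕ)) u) = 0 := hx1
    rw [map_sum] at hφx
    simp_rw [map_smul, hφchain] at hφx
    have hc : ∀ i, c i = 0 := by
      intro i
      have := congrFun hφx i
      rwa [hsum] at this
    have : (∑ j, c j • (N ^ (j : ℕ)) u) = 0 := by
      rw [Finset.sum_congr rfl (fun j _ => by rw [hc j, zero_smul])]
      simp
    rw [this]
    exact Submodule.zero_mem _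
  have hsup : W₁ ⊔ W₂ = ⊤ := by
    rw [eq_top_iff]
    intro v _
    set w : V := ∑ j : Fin (m + 1), φ v j • (N ^ (j : ℕ)) u with hw
    have hwW₂ : w ∈ W₂ :=
      Submodule.sum_mem _ (fun j _ => Submodule.smul_mem _ _
        (Submodule.subset_span ⟨j, rfl⟩))
    have hvw : v - w ∈ W₁ := by
      rw [hW₁, LinearMap.mem_ker, map_sub]
      have : φ w = φ v := by
        rw [hw, map_sum]
        simp_rw [map_smul, hφchain]
        funext i
        rw [hsum]
      rw [this, sub_self]
    exact Submodule.mem_sup.mpr ⟨v - w, hvw, w, hwW₂, by abel⟩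
  exact ⟨W₁, W₂, hW2ne, hW2U, hdisj, hsup, hW1inv, hW2inv⟩

/-- In a positive semidefinite hermitian form, isotropic vectors are in the radical. -/
lemma aux_radical (B : V →ₗ⋆[ℂ] V →ₗ[ℂ] ℂ)
    (hHerm : ∀ u v : V, star (B u v) = B v u)
    (hPos : ∀ u : V, 0 ≤ (B u u).re)
    (v : V) (hv : B v v = 0) (u : V) : B u v = 0 := by
  by_contra hc
  obtain ⟨c, hcdef⟩ : ∃ c : ℂ, c = B u v := ⟨_, rfl⟩
  rw [← hcdef] at hc
  have hns : Complex.normSq c ≠ 0 := by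
    simpa [Complex.normSq_eq_zero] using hc
  obtain ⟨s, hs⟩ : ∃ s : ℝ, s = ((B u u).re + 1) / Complex.normSq c := ⟨_, rfl⟩
  obtain ⟨t, ht⟩ : ∃ t : ℂ, t = -(s : ℂ) * (starRingEnd ℂ) c := ⟨_, rfl⟩
  have hBvu : B v u = (starRingEnd ℂ) c := by rw [hcdef]; exact (hHerm u v).symm
  have hexp : B (u + t • v) (u + t • v)
      = B u u + (t * c + (starRingEnd ℂ) (t * c)) := by
    have e1 : B (u + t • v) = B u + (starRingEnd ℂ) t • B v := by
      rw [map_add, LinearMap.map_smulₛₗ]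
    rw [e1]
    simp only [LinearMap.add_apply, LinearMap.smul_apply, map_add, map_smul, smul_eq_mul]
    rw [hv, hBvu, ← hcdef, map_mul]
    ring
  have hsn : s * Complex.normSq c = (B u u).re + 1 := by
    rw [hs]; exact div_mul_cancel₀ _ hns
  have hconj : (starRingEnd ℂ) c * c = (Complex.normSq c : ℂ) := by
    rw [mul_comm, Complex.mul_conj]
  have htc : t * c = -(((B u u).re + 1 : ℝ) : ℂ) := by
    rw [ht, mul_assoc, hconj, ← hsn]
    push_cast
    ring
  have hre := hPos (u + t • v)
  rw [hexp, htc] at hre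
  simp only [map_neg, Complex.conj_ofReal, Complex.add_re, Complex.neg_re,
    Complex.ofReal_re] at hre
  have := hPos u
  linarith

end Aux

/-- For an indecomposable bounded operator `A` on a semiunitary space
with `0 ≠ U₀ ≠ U`, every eigenvalue `λ` of `A₀ = A|_{U₀}`, and every `k ≥ 1`, the
geometric multiplicity of `λ` in the induced operator `A₁` on `U/U₀` is at least the
number of Jordan blocks `J_k(λ)` of size exactly `k` in the Jordan form of `A₀`, the
latter computed as `rank (A₀-λ)^{k-1} - 2 rank (A₀-λ)^k + rank (A₀-λ)^{k+1}`. -/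
theorem stmt_15 {V : Type} [AddCommGroup V] [Module ℂ V] [FiniteDimensional ℂ V]
    (B : V →ₗ⋆[ℂ] V →ₗ[ℂ] ℂ)
    (hHerm : ∀ u v : V, star (B u v) = B v u)
    (hPos : ∀ u : V, 0 ≤ (B u u).re)
    (U₀ : Submodule ℂ V) (hU₀ : ∀ u : V, u ∈ U₀ ↔ B u u = 0)
    (hbot : U₀ ≠ ⊥) (htop : U₀ ≠ ⊤)
    (A : V →ₗ[ℂ] V) (hinv : ∀ u ∈ U₀, A u ∈ U₀)
    (hindec : ¬ ∃ W₁ W₂ : Submodule ℂ V, W₁ ≠ ⊥ ∧ W₂ ≠ ⊥ ∧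
      W₁ ⊓ W₂ = ⊥ ∧ W₁ ⊔ W₂ = ⊤ ∧
      (∀ u ∈ W₁, A u ∈ W₁) ∧ (∀ u ∈ W₂, A u ∈ W₂) ∧
      (∀ u ∈ W₁, ∀ v ∈ W₂, B u v = 0))
    (lam : ℂ) (hlam : Module.End.HasEigenvalue (A.restrict hinv) lam)
    (k : ℕ) (hk : 1 ≤ k)
    (rk : ℕ → ℕ)
    (hrk : ∀ j : ℕ, rk j = Module.finrank ℂ
      (LinearMap.range (((A.restrict hinv : Module.End ℂ U₀) - lam • 1) ^ j))) :
    (rk (k - 1) : ℤ) - 2 * (rk k : ℤ) + (rk (k + 1) : ℤ) ≤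
      (Module.finrank ℂ
        (Module.End.eigenspace (Submodule.mapQ U₀ U₀ A hinv) lam) : ℤ) := by
  classical
  obtain ⟨m, rfl⟩ : ∃ m, k = m + 1 := ⟨k - 1, by omega⟩
  set N : V →ₗ[ℂ] V := A - lam • LinearMap.id with hN
  have hNapp : ∀ x : V, N x = A x - lam • x := by
    intro x
    simp [hN]
  have hNinv : ∀ x ∈ U₀, N x ∈ U₀ := fun x hx => by
    rw [hNapp]
    exact Submodule.sub_mem _ (hinv x hx) (Submodule.smul_mem _ _ hx)
  have hAN : ∀ x : V, A x = N x + lam • x := by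
    intro x
    rw [hNapp]
    abel
  -- the restricted operator
  have hrestr : (A.restrict hinv : Module.End ℂ U₀) - lam • 1 = N.restrict hNinv := by
    ext x
    simp only [LinearMap.sub_apply, LinearMap.smul_apply, Module.End.one_apply,
      AddSubgroupClass.coe_sub, SetLike.val_smul, LinearMap.restrict_coe_apply, hNapp]
  -- rank translation
  have hrk2 : ∀ j : ℕ, rk j + finrank ℂ ↥(LinearMap.ker (N ^ j) ⊓ U₀) = finrank ℂ U₀ := by
    intro j
    have h := LinearMap.finrank_range_add_finrank_ker
      (((A.restrict hinv : Module.End ℂ U₀) - lam • 1) ^ j)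
    rw [← hrk j] at h
    rw [hrestr, Module.End.pow_restrict] at h
    rw [LinearMap.ker_restrict] at h
    have e : (LinearMap.ker (N ^ j)).comap U₀.subtype
        = ((LinearMap.ker (N ^ j) ⊓ U₀).comap U₀.subtype) := by
      ext x
      simp [LinearMap.mem_ker, x.2]
    rw [e, (Submodule.comapSubtypeEquivOfLe (inf_le_right :
        LinearMap.ker (N ^ j) ⊓ U₀ ≤ U₀)).finrank_eq] at h
    exact h
  -- eigenspace translation
  have hmapQ : Module.End.eigenspace (Submodule.mapQ U₀ U₀ A hinv) lam
      = LinearMap.ker (Submodule.mapQ U₀ U₀ N hNinv) := by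
    ext q
    obtain ⟨x, rfl⟩ := U₀.mkQ_surjective q
    rw [Module.End.mem_eigenspace_iff, LinearMap.mem_ker]
    rw [Submodule.mkQ_apply, Submodule.mapQ_apply, Submodule.mapQ_apply]
    have e : (Submodule.Quotient.mk (N x) : V ⧸ U₀)
        = Submodule.Quotient.mk (A x) - lam • Submodule.Quotient.mk x := by
      rw [hNapp]
      rfl
    rw [e, sub_eq_zero]
  have hg : finrank ℂ ↥(LinearMap.ker (Submodule.mapQ U₀ U₀ N hNinv)) + finrank ℂ U₀
      = finrank ℂ ↥(U₀.comap N) := by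
    have h := LinearMap.finrank_range_add_finrank_ker
      ((U₀.mkQ).domRestrict (U₀.comap N))
    rw [LinearMap.range_domRestrict, LinearMap.ker_domRestrict, Submodule.ker_mkQ] at h
    have e1 : (U₀.comap N).map U₀.mkQ = LinearMap.ker (Submodule.mapQ U₀ U₀ N hNinv) := by
      apply le_antisymm
      · rintro _ ⟨x, hx, rfl⟩
        rw [LinearMap.mem_ker, Submodule.mkQ_apply, Submodule.mapQ_apply]
        simpa [Submodule.Quotient.mk_eq_zero] using hx
      · intro q hq
        obtain ⟨x, rfl⟩ := U₀.mkQ_surjective q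
        rw [LinearMap.mem_ker, Submodule.mkQ_apply, Submodule.mapQ_apply,
          Submodule.Quotient.mk_eq_zero] at hq
        exact ⟨x, hq, rfl⟩
    have e2 : finrank ℂ ↥(U₀.comap ((U₀.comap N).subtype))
        = finrank ℂ U₀ := by
      have hle : U₀ ≤ U₀.comap N := fun x hx => hNinv x hx
      have e : U₀.comap ((U₀.comap N).subtype)
          = (U₀ ⊓ U₀.comap N).comap ((U₀.comap N).subtype) := by
        ext x
        simp [x.2]
      rw [e, (Submodule.comapSubtypeEquivOfLe (inf_le_right :
          U₀ ⊓ U₀.comap N ≤ U₀.comap N)).finrank_eq]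
      rw [inf_of_le_left hle]
    rw [e1, e2] at h
    exact h
  -- the star condition from indecomposability
  have hstar : (LinearMap.ker (N ^ (m + 1)) ⊓ U₀).map (N ^ m)
      ≤ (⊤ : Submodule ℂ V).map (N ^ (m + 1)) := by
    rintro _ ⟨w, ⟨hw1, hw2⟩, rfl⟩
    rw [Submodule.map_top]
    by_contra hnot
    obtain ⟨W₁, W₂, h1, h2, h3, h4, h5, h6⟩ :=
      aux_split N U₀ hNinv m w hw2 (LinearMap.mem_ker.mp hw1) hnot
    apply hindec
    refine ⟨W₁, W₂, ?_, h1, h3, h4, ?_, ?_, ?_⟩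
    · intro hb
      rw [hb, bot_sup_eq] at h4
      rw [h4] at h2
      exact htop (eq_top_iff.mpr h2)
    · intro x hx
      rw [hAN x]
      exact Submodule.add_mem _ (h5 x hx) (Submodule.smul_mem _ _ hx)
    · intro x hx
      rw [hAN x]
      exact Submodule.add_mem _ (h6 x hx) (Submodule.smul_mem _ _ hx)
    · intro a _ b hb
      exact aux_radical B hHerm hPos b ((hU₀ b).mp (h2 hb)) a
  have hUmap : U₀.map N ≤ U₀ := by
    rintro _ ⟨x, hx, rfl⟩
    exact hNinv x hx
  have hmain := aux_main N m U₀ ⊤ le_top hUmap le_top hstar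
  rw [inf_top_eq] at hmain
  -- final arithmetic
  have e1 : m + 1 - 1 = m := rfl
  rw [e1]
  have h1 := hrk2 m
  have h2 := hrk2 (m + 1)
  have h3 := hrk2 (m + 2)
  have e2 : m + 1 + 1 = m + 2 := rfl
  rw [e2]
  rw [hmapQ]
  omega
end

section
/- Every nonsingular n×n complex matrix S of the block form [[S₁₁, 0],[S₂₁, S₂₂]] with S₁₁ an m×m unitary matrix can be written as a finite product of matrices of the three forms [[R₁,0],[0,I]] with R₁ unitary of size m, [[I,0],[0,R₂]] with R₂ an elementary (nonsingular) matrix of size n−m, and [[I,0],[R₃,I]] with R₃ an (n−m)×m matrix having exactly one nonzero entry. -/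
open Matrix

section Aux

variable {m k : ℕ}

/-- Predicate: elementary matrix of size k. -/
def IsElem (R₂ : Matrix (Fin k) (Fin k) ℂ) : Prop :=
  (∃ i j : Fin k, i ≠ j ∧ ∃ c : ℂ, R₂ = 1 + Matrix.single i j c) ∨
  (∃ (i : Fin k) (c : ℂ), c ≠ 0 ∧
    R₂ = Matrix.diagonal fun l => if l = i then c else 1) ∨
  (∃ i j : Fin k,
    R₂ = Matrix.of fun a b => if b = Equiv.swap i j a then 1 else 0)

lemma diag_map_prod (fs : List (Fin k → ℂ)) :
    (fs.map Matrix.diagonal).prod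
      = Matrix.diagonal (fun x => (fs.map (fun f => f x)).prod) := by
  induction fs with
  | nil => simp [Matrix.diagonal_one]
  | cons f fs ih =>
      simp only [List.map_cons, List.prod_cons, ih, Matrix.diagonal_mul_diagonal]

lemma diagonal_decomp (D : Fin k → ℂ) (hD : ∀ i, D i ≠ 0) :
    ∃ L : List (Matrix (Fin k) (Fin k) ℂ),
      (∀ R ∈ L, IsElem R) ∧ L.prod = Matrix.diagonal D := by
  refine ⟨(List.finRange k).map fun i =>
    Matrix.diagonal (fun l => if l = i then D i else 1), ?_, ?_⟩
  · intro R hR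
    simp only [List.mem_map, List.mem_finRange, true_and] at hR
    obtain ⟨i, rfl⟩ := hR
    exact Or.inr (Or.inl ⟨i, D i, hD i, rfl⟩)
  · have h1 : ((List.finRange k).map fun i =>
        Matrix.diagonal (fun l => if l = i then D i else 1))
        = ((List.finRange k).map fun i l => if l = i then D i else 1).map
            Matrix.diagonal := by rw [List.map_map]; rfl
    rw [h1, diag_map_prod]
    refine congrArg Matrix.diagonal (funext fun x => ?_)
    rw [List.map_map]
    have h2 : (∏ i : Fin k, if x = i then D i else 1)
        = ((List.finRange k).map
            ((fun f => f x) ∘ fun i l => if l = i then D i else 1)).prod :=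
      Fin.prod_univ_def _
    rw [← h2, Finset.prod_ite_eq]
    simp

lemma elem_decomp (A : Matrix (Fin k) (Fin k) ℂ) (hA : A.det ≠ 0) :
    ∃ L : List (Matrix (Fin k) (Fin k) ℂ),
      (∀ R ∈ L, IsElem R) ∧ L.prod = A := by
  obtain ⟨L, L', D, h⟩ := Matrix.Pivot.exists_list_transvec_mul_diagonal_mul_list_transvec A
  have hDdet : (Matrix.diagonal D).det ≠ 0 := by
    intro h0
    apply hA
    rw [h, Matrix.det_mul, Matrix.det_mul, h0, mul_zero, zero_mul]
  have hD : ∀ i, D i ≠ 0 := by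
    rw [Matrix.det_diagonal] at hDdet
    intro i hi
    exact hDdet (Finset.prod_eq_zero (Finset.mem_univ i) hi)
  obtain ⟨LD, hLD, hLDprod⟩ := diagonal_decomp D hD
  refine ⟨L.map Matrix.TransvectionStruct.toMatrix ++ LD
    ++ L'.map Matrix.TransvectionStruct.toMatrix, ?_, ?_⟩
  · intro R hR
    simp only [List.mem_append, List.mem_map] at hR
    rcases hR with (⟨t, _, rfl⟩ | hR) | ⟨t, _, rfl⟩
    · exact Or.inl ⟨t.i, t.j, t.hij, t.c, rfl⟩
    · exact hLD R hR
    · exact Or.inl ⟨t.i, t.j, t.hij, t.c, rfl⟩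
  · rw [List.prod_append, List.prod_append, hLDprod, h]

/-- Lift a k×k product to block form. -/
lemma block22_prod (L : List (Matrix (Fin k) (Fin k) ℂ)) :
    ((L.map fun R => Matrix.fromBlocks (1 : Matrix (Fin m) (Fin m) ℂ) 0 0 R).prod)
      = Matrix.fromBlocks 1 0 0 L.prod := by
  induction L with
  | nil => simp [Matrix.fromBlocks_one]
  | cons R L ih =>
      simp only [List.map_cons, List.prod_cons, ih, Matrix.fromBlocks_multiply]
      simp

lemma lower_decomp (X : Matrix (Fin k) (Fin m) ℂ) :
    ∃ L : List (Matrix (Fin m ⊕ Fin k) (Fin m ⊕ Fin k) ℂ),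
      (∀ M ∈ L, ∃ R₃ : Matrix (Fin k) (Fin m) ℂ,
        (∃ (i : Fin k) (j : Fin m), R₃ i j ≠ 0 ∧
          ∀ (i' : Fin k) (j' : Fin m), (i' ≠ i ∨ j' ≠ j) → R₃ i' j' = 0) ∧
        M = Matrix.fromBlocks 1 0 R₃ 1) ∧
      L.prod = Matrix.fromBlocks 1 0 X 1 := by
  have key : ∀ s : Finset (Fin k × Fin m),
      ∃ L : List (Matrix (Fin m ⊕ Fin k) (Fin m ⊕ Fin k) ℂ),
      (∀ M ∈ L, ∃ R₃ : Matrix (Fin k) (Fin m) ℂ,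
        (∃ (i : Fin k) (j : Fin m), R₃ i j ≠ 0 ∧
          ∀ (i' : Fin k) (j' : Fin m), (i' ≠ i ∨ j' ≠ j) → R₃ i' j' = 0) ∧
        M = Matrix.fromBlocks 1 0 R₃ 1) ∧
      L.prod = Matrix.fromBlocks 1 0
        (∑ p ∈ s, Matrix.single p.1 p.2 (X p.1 p.2)) 1 := by
    intro s
    induction s using Finset.induction_on with
    | empty => exact ⟨[], by simp, by simp [Matrix.fromBlocks_one]⟩
    | @insert p s hp ih =>
        obtain ⟨L, hL, hLprod⟩ := ih
        by_cases hX : X p.1 p.2 = 0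
        · refine ⟨L, hL, ?_⟩
          rw [Finset.sum_insert hp, hX]
          simpa using hLprod
        · refine ⟨Matrix.fromBlocks 1 0
            (Matrix.single p.1 p.2 (X p.1 p.2)) 1 :: L, ?_, ?_⟩
          · rintro M hM
            rcases List.mem_cons.1 hM with rfl | hM
            · refine ⟨_, ⟨p.1, p.2, ?_, ?_⟩, rfl⟩
              · simpa [Matrix.single] using hX
              · intro i' j' h
                simp only [Matrix.single, Matrix.of_apply, ite_eq_right_iff]
                rintro ⟨rfl, rfl⟩
                tauto
            · exact hL M hM
          · rw [List.prod_cons, hLprod, Matrix.fromBlocks_multiply,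
              Finset.sum_insert hp]
            simp [add_comm]
  obtain ⟨L, hL, hLprod⟩ := key Finset.univ
  refine ⟨L, hL, ?_⟩
  have hx : (∑ p : Fin k × Fin m, Matrix.single p.1 p.2 (X p.1 p.2)) = X := by
    conv_rhs => rw [Matrix.matrix_eq_sum_single X]
    rw [← Finset.sum_product', Finset.univ_product_univ]
  rw [hLprod, hx]

end Aux

/-- Every nonsingular block lower triangular matrix with unitary `(1,1)`
block is a finite product of matrices of three elementary forms: `[[R₁,0],[0,I]]` with
`R₁` unitary; `[[I,0],[0,R₂]]` with `R₂` an elementary matrix (transvection, dilation,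
or transposition); and `[[I,0],[R₃,I]]` with `R₃` having exactly one nonzero entry. -/
theorem stmt_18 (m k : ℕ) (S : Matrix (Fin m ⊕ Fin k) (Fin m ⊕ Fin k) ℂ)
    (hS : IsUnit S)
    (hlow : ∀ (i : Fin m) (j : Fin k), S (Sum.inl i) (Sum.inr j) = 0)
    (hunit : (S.toBlocks₁₁)ᴴ * S.toBlocks₁₁ = 1) :
    ∃ L : List (Matrix (Fin m ⊕ Fin k) (Fin m ⊕ Fin k) ℂ),
      (∀ M ∈ L,
        (∃ R₁ : Matrix (Fin m) (Fin m) ℂ, R₁ᴴ * R₁ = 1 ∧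
          M = Matrix.fromBlocks R₁ 0 0 1) ∨
        (∃ R₂ : Matrix (Fin k) (Fin k) ℂ,
          ((∃ i j : Fin k, i ≠ j ∧ ∃ c : ℂ, R₂ = 1 + Matrix.single i j c) ∨
           (∃ (i : Fin k) (c : ℂ), c ≠ 0 ∧
             R₂ = Matrix.diagonal fun l => if l = i then c else 1) ∨
           (∃ i j : Fin k,
             R₂ = Matrix.of fun a b => if b = Equiv.swap i j a then 1 else 0)) ∧
          M = Matrix.fromBlocks 1 0 0 R₂) ∨
        (∃ R₃ : Matrix (Fin k) (Fin m) ℂ,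
          (∃ (i : Fin k) (j : Fin m), R₃ i j ≠ 0 ∧
            ∀ (i' : Fin k) (j' : Fin m), (i' ≠ i ∨ j' ≠ j) → R₃ i' j' = 0) ∧
          M = Matrix.fromBlocks 1 0 R₃ 1)) ∧
      L.prod = S := by
  set A := S.toBlocks₁₁ with hA
  set B := S.toBlocks₂₁ with hB
  set C := S.toBlocks₂₂ with hC
  have hS12 : S.toBlocks₁₂ = 0 := by
    ext i j; exact hlow i j
  have hSblocks : S = Matrix.fromBlocks A 0 B C := by
    conv_lhs => rw [← Matrix.fromBlocks_toBlocks S]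
    rw [hS12]
  -- det C ≠ 0
  have hdetS : S.det ≠ 0 := by
    have := hS.map Matrix.detMonoidHom
    simpa using this.ne_zero
  have hdetC : C.det ≠ 0 := by
    intro h0
    apply hdetS
    rw [hSblocks, Matrix.det_fromBlocks_zero₁₂, h0, mul_zero]
  -- decompositions
  obtain ⟨L₃, hL₃, hL₃prod⟩ := lower_decomp (B * Aᴴ)
  obtain ⟨L₂, hL₂, hL₂prod⟩ := elem_decomp C hdetC
  refine ⟨L₃ ++ [Matrix.fromBlocks A 0 0 1]
      ++ L₂.map (fun R => Matrix.fromBlocks 1 0 0 R), ?_, ?_⟩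
  · intro M hM
    simp only [List.mem_append, List.mem_singleton, List.mem_map] at hM
    rcases hM with (hM | rfl) | ⟨R, hR, rfl⟩
    · exact Or.inr (Or.inr (hL₃ M hM))
    · exact Or.inl ⟨A, hunit, rfl⟩
    · exact Or.inr (Or.inl ⟨R, hL₂ R hR, rfl⟩)
  · rw [List.prod_append, List.prod_append, List.prod_singleton,
      block22_prod, hL₂prod, hL₃prod, hSblocks, Matrix.fromBlocks_multiply,
      Matrix.fromBlocks_multiply]
    have hBA : B * Aᴴ * A = B := by
      rw [Matrix.mul_assoc, hunit, Matrix.mul_one]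
    simp [hBA]
end
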